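/- Let F ⊆ 2^X have VC-dimension at most t, and let F^∩k denote the family of all intersections of at most k members of F. If a set A of size m is shattered by F^∩k, then 2^m ≤ (Σ_{i≤t} C(m,i))^k; consequently the VC-dimension of F^∩k is at most C·t·k·log₂(k+1) for an absolute constant C (e.g., C = 4 suffices for t,k ≥ 1). -/

import Mathlib

open Finset

/-- A set `Y` (given as a finset) is shattered by the family `F`. -/
def ShatteredBy {X : Type*} (F : Set (Set X)) (Y : Finset X) : Prop :=
  ∀ B : Finset X, B ⊆ Y → ∃ S ∈ F, S ∩ (Y : Set X) = (B : Set X)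

/-- The family of intersections of at most `k` members of `F`. -/
def InterClosure {X : Type*} (F : Set (Set X)) (k : ℕ) : Set (Set X) :=
  {S | ∃ G : Finset (Set X), (G : Set (Set X)) ⊆ F ∧ G.Nonempty ∧ G.card ≤ k ∧
    S = ⋂₀ (G : Set (Set X))}

/-- Blumer–Ehrenfeucht–Haussler–Warmuth: if `F` has VC-dimension at most `t`, then any
set of size `m` shattered by `F^∩k` satisfies `2^m ≤ (∑_{i ≤ t} C(m,i))^k`, and
consequently the VC-dimension of `F^∩k` is at most `4·t·k·log₂(k+1)`. -/
lemma sauer_real (m t : ℕ) (ht : 1 ≤ t) (htm : t ≤ m) :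
    ((∑ i ∈ Finset.range (t+1), m.choose i : ℕ) : ℝ) ≤ Real.exp t * ((m : ℝ)/t)^t := by
  have hm : 1 ≤ m := le_trans ht htm
  have hm0 : (0:ℝ) < m := by exact_mod_cast hm
  have ht0 : (0:ℝ) < t := by exact_mod_cast ht
  set x : ℝ := (t:ℝ)/m with hx
  have hx0 : 0 < x := div_pos ht0 hm0
  have hx1 : x ≤ 1 := by
    rw [hx, div_le_one hm0]; exact_mod_cast htm
  have key : x^t * ((∑ i ∈ Finset.range (t+1), m.choose i : ℕ) : ℝ) ≤ Real.exp t := by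
    have h1 : x^t * ((∑ i ∈ Finset.range (t+1), m.choose i : ℕ) : ℝ)
        ≤ ∑ i ∈ Finset.range (t+1), (m.choose i : ℝ) * x^i := by
      rw [Nat.cast_sum, Finset.mul_sum]
      apply Finset.sum_le_sum
      intro i hi
      rw [Finset.mem_range] at hi
      have : x^t ≤ x^i := pow_le_pow_of_le_one hx0.le hx1 (by omega)
      calc x^t * (m.choose i : ℝ) = (m.choose i : ℝ) * x^t := by ring
        _ ≤ (m.choose i : ℝ) * x^i := by
            apply mul_le_mul_of_nonneg_left this (by positivity)
    have h2 : ∑ i ∈ Finset.range (t+1), (m.choose i : ℝ) * x^i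
        ≤ ∑ i ∈ Finset.range (m+1), (m.choose i : ℝ) * x^i := by
      apply Finset.sum_le_sum_of_subset_of_nonneg
      · exact Finset.range_subset_range.2 (by omega)
      · intro i _ _; positivity
    have h3 : ∑ i ∈ Finset.range (m+1), (m.choose i : ℝ) * x^i = (x+1)^m := by
      rw [add_pow]
      apply Finset.sum_congr rfl
      intro i _; ring
    have h4 : (x+1)^m ≤ Real.exp t := by
      have := Real.add_one_le_exp x
      calc (x+1)^m ≤ (Real.exp x)^m := by
            apply pow_le_pow_left₀ (by positivity) this
        _ = Real.exp (x * m) := by rw [← Real.exp_nat_mul]; ring_nf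
        _ = Real.exp t := by
            congr 1
            rw [hx, div_mul_cancel₀ _ hm0.ne']
    linarith
  have hxt : 0 < x^t := pow_pos hx0 t
  have key2 : ((∑ i ∈ Finset.range (t+1), m.choose i : ℕ) : ℝ) ≤ Real.exp t / x^t := by
    rw [le_div_iff₀ hxt]; linarith [key]
  calc ((∑ i ∈ Finset.range (t+1), m.choose i : ℕ) : ℝ) ≤ Real.exp t / x^t := key2
    _ = Real.exp t * ((m:ℝ)/t)^t := by
        rw [div_eq_mul_inv, ← inv_pow]
        congr 2
        rw [hx]; field_simp

-- key numeric inequality: for k ≥ 2, log(4k·L) + 1 ≤ 4 log(k+1), L = logb 2 (k+1)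
lemma key_numeric (k : ℕ) (hk : 2 ≤ k) :
    Real.log (4 * k * Real.logb 2 ((k:ℝ)+1)) + 1 ≤ 4 * Real.log ((k:ℝ)+1) := by
  have h2 : (0:ℝ) < Real.log 2 := Real.log_pos (by norm_num)
  have hk0 : (0:ℝ) < k := by exact_mod_cast (by omega : 0 < k)
  set u : ℝ := Real.log ((k:ℝ)+1) with hu
  have hu3 : Real.log 3 ≤ u := Real.log_le_log (by norm_num) (by exact_mod_cast (by omega : (3:ℕ) ≤ k+1))
  have h1lt3 : (1:ℝ) ≤ Real.log 3 := by
    rw [Real.le_log_iff_exp_le (by norm_num)]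
    calc Real.exp 1 ≤ 2.7182818286 := Real.exp_one_lt_d9.le
      _ ≤ 3 := by norm_num
  have hu1 : 1 ≤ u := le_trans h1lt3 hu3
  have hupos : 0 < u := by linarith
  have hL : Real.logb 2 ((k:ℝ)+1) = u / Real.log 2 := by rw [Real.logb, hu]
  have hLpos : 0 < u / Real.log 2 := div_pos hupos h2
  -- log(4kL) = log 4 + log k + log L
  have hlogsplit : Real.log (4 * k * Real.logb 2 ((k:ℝ)+1))
      = Real.log 4 + Real.log k + Real.log (u / Real.log 2) := by
    rw [hL, Real.log_mul (by positivity) (by positivity), Real.log_mul (by norm_num) (by positivity)]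
  have hlogk : Real.log k ≤ u := Real.log_le_log hk0 (by linarith)
  have hlogL : Real.log (u / Real.log 2) = Real.log u - Real.log (Real.log 2) :=
    Real.log_div (by positivity) (by positivity)
  have hlogu : Real.log u ≤ u - 1 := Real.log_le_sub_one_of_pos hupos
  -- log 4 - log (log 2) ≤ 2 * log 3 ≤ 2u  since 4 / log 2 ≤ 9 (log 2 ≥ 4/9)
  have hln2 : (4:ℝ)/9 ≤ Real.log 2 := by
    calc (4:ℝ)/9 ≤ 0.6931471803 := by norm_num
      _ ≤ Real.log 2 := Real.log_two_gt_d9.le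
  have hmain : Real.log 4 - Real.log (Real.log 2) ≤ 2 * u := by
    have : Real.log 4 - Real.log (Real.log 2) = Real.log (4 / Real.log 2) := by
      rw [Real.log_div (by norm_num) (by positivity)]
    rw [this]
    have h49 : (4:ℝ) / Real.log 2 ≤ 9 := by
      rw [div_le_iff₀ h2]; linarith
    calc Real.log (4 / Real.log 2) ≤ Real.log 9 := Real.log_le_log (by positivity) h49
      _ = 2 * Real.log 3 := by
          rw [show (9:ℝ) = 3^2 by norm_num, Real.log_pow]; push_cast; ring
      _ ≤ 2 * u := by linarith
  rw [hlogsplit, hlogL]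
  linarith

lemma behw_part1 {X : Type*} (F : Set (Set X)) (t k : ℕ) (hk : 1 ≤ k)
    (hVC : ∀ Y : Finset X, ShatteredBy F Y → Y.card ≤ t)
    (A : Finset X) (m : ℕ) (hA : A.card = m)
    (hsh : ShatteredBy (InterClosure F k) A) :
    2 ^ m ≤ (∑ i ∈ Finset.range (t + 1), m.choose i) ^ k := by
  classical
  set 𝒯 : Finset (Finset X) :=
    A.powerset.filter (fun B => ∃ S ∈ F, S ∩ (A : Set X) = (B : Set X)) with h𝒯
  -- Step A: |𝒯| ≤ ∑ choose
  have hTcard : 𝒯.card ≤ ∑ i ∈ Finset.range (t + 1), m.choose i := by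
    refine (Finset.card_le_card_shatterer 𝒯).trans ?_
    have hsub : 𝒯.shatterer ⊆ (Finset.range (t+1)).biUnion (fun i => A.powersetCard i) := by
      intro s hs
      rw [Finset.mem_shatterer] at hs
      have hsA : s ⊆ A := by
        obtain ⟨u, hu, hsu⟩ := hs (Finset.Subset.refl s)
        have : s ⊆ u := by rw [← hsu]; exact Finset.inter_subset_right
        exact this.trans (Finset.mem_powerset.1 (Finset.mem_filter.1 hu).1)
      have hFsh : ShatteredBy F s := by
        intro B hB
        obtain ⟨u, hu, hsu⟩ := hs hB
        obtain ⟨S₀, hS₀F, hS₀⟩ := (Finset.mem_filter.1 hu).2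
        refine ⟨S₀, hS₀F, ?_⟩
        have : S₀ ∩ (s : Set X) = (S₀ ∩ (A : Set X)) ∩ (s : Set X) := by
          rw [Set.inter_assoc]
          congr 1
          rw [Set.inter_eq_right.2 (by exact_mod_cast Finset.coe_subset.2 hsA)]
        rw [this, hS₀, ← Finset.coe_inter, Finset.inter_comm, hsu]
      have hcard : s.card ≤ t := hVC s hFsh
      rw [Finset.mem_biUnion]
      exact ⟨s.card, Finset.mem_range.2 (by omega), Finset.mem_powersetCard.2 ⟨hsA, rfl⟩⟩
    refine (Finset.card_le_card hsub).trans ?_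
    refine (Finset.card_biUnion_le).trans ?_
    apply Finset.sum_le_sum
    intro i _
    rw [Finset.card_powersetCard, hA]
  -- Step B: choose witnesses
  have key : ∀ B : Finset X, ∃ G : Finset (Set X), B ⊆ A →
      ((G : Set (Set X)) ⊆ F ∧ G.Nonempty ∧ G.card ≤ k ∧
        ⋂₀ (G : Set (Set X)) ∩ (A : Set X) = (B : Set X)) := by
    intro B
    by_cases hB : B ⊆ A
    · obtain ⟨S, hSmem, hSB⟩ := hsh B hB
      obtain ⟨G, hGF, hGne, hGk, rfl⟩ := hSmem
      exact ⟨G, fun _ => ⟨hGF, hGne, hGk, hSB⟩⟩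
    · exact ⟨∅, fun h => absurd h hB⟩
  choose G hG using key
  -- the tuple of sets
  set g : Finset X → Fin k → Set X :=
    fun B i => (G B).toList.getD i Set.univ with hg
  set f : Finset X → (Fin k → Finset X) :=
    fun B i => A.filter (fun a => a ∈ g B i) with hf
  -- A itself is in 𝒯
  have hAT : A ∈ 𝒯 := by
    obtain ⟨hGF, hGne, hGk, hGA⟩ := hG A (Finset.Subset.refl A)
    obtain ⟨T, hT⟩ := hGne
    refine Finset.mem_filter.2 ⟨Finset.mem_powerset_self A, T, hGF hT, ?_⟩
    apply Set.Subset.antisymm (Set.inter_subset_right)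
    intro a ha
    have : a ∈ ⋂₀ (G A : Set (Set X)) ∩ (A : Set X) := by rw [hGA]; exact ha
    exact ⟨this.1 T hT, ha⟩
  -- each g B i, for B ⊆ A, is either in G B or univ
  have hg_mem : ∀ B, ∀ i : Fin k, g B i ∈ G B ∨ g B i = Set.univ := by
    intro B i
    by_cases hi : (i : ℕ) < (G B).toList.length
    · left
      rw [hg]
      simp only [List.getD_eq_getElem _ _ hi]
      exact Finset.mem_toList.1 (List.getElem_mem hi)
    · right
      rw [hg]
      exact List.getD_eq_default _ _ (by omega)
  -- ⋂ i, g B i = ⋂₀ G B  (for B ⊆ A)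
  have hg_inter : ∀ B, B ⊆ A → (⋂ i : Fin k, g B i) = ⋂₀ ((G B) : Set (Set X)) := by
    intro B hB
    obtain ⟨hGF, hGne, hGk, hGA⟩ := hG B hB
    apply Set.Subset.antisymm
    · intro x hx
      rw [Set.mem_sInter]
      intro T hT
      rw [Finset.mem_coe, ← Finset.mem_toList, List.mem_iff_getElem] at hT
      obtain ⟨j, hj, rfl⟩ := hT
      have hjk : j < k := lt_of_lt_of_le hj (by rw [Finset.length_toList]; exact hGk)
      have h5 : x ∈ (G B).toList.getD j Set.univ := Set.mem_iInter.1 hx ⟨j, hjk⟩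
      rwa [List.getD_eq_getElem _ _ hj] at h5
    · intro x hx
      rw [Set.mem_iInter]
      intro i
      rcases hg_mem B i with h | h
      · exact Set.mem_sInter.1 hx _ (Finset.mem_coe.2 h)
      · rw [h]; trivial
  -- B is recoverable from f B
  have hrecover : ∀ B, B ⊆ A → (B : Set X) = ⋂ i : Fin k, ((f B i : Finset X) : Set X) := by
    intro B hB
    obtain ⟨hGF, hGne, hGk, hGA⟩ := hG B hB
    have hne : Nonempty (Fin k) := ⟨⟨0, hk⟩⟩
    have : ((f B ·) : Fin k → Finset X) = fun i => A.filter (fun a => a ∈ g B i) := rfl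
    calc (B : Set X) = ⋂₀ ((G B) : Set (Set X)) ∩ (A : Set X) := hGA.symm
      _ = (⋂ i : Fin k, g B i) ∩ (A : Set X) := by rw [hg_inter B hB]
      _ = ⋂ i : Fin k, (g B i ∩ (A : Set X)) := by rw [Set.iInter_inter]
      _ = ⋂ i : Fin k, ((f B i : Finset X) : Set X) := by
          apply Set.iInter_congr
          intro i
          rw [hf]
          simp only [Finset.coe_filter]
          ext a
          simp [and_comm]
  -- f maps powerset into piFinset 𝒯
  have hmaps : ∀ B ∈ A.powerset, f B ∈ Fintype.piFinset (fun _ : Fin k => 𝒯) := by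
    intro B hB
    rw [Fintype.mem_piFinset]
    intro i
    have hBA := Finset.mem_powerset.1 hB
    rcases hg_mem B i with h | h
    · refine Finset.mem_filter.2 ⟨Finset.mem_powerset.2 (Finset.filter_subset _ _), g B i, ?_, ?_⟩
      · exact (hG B hBA).1 h
      · rw [hf]
        simp only [Finset.coe_filter]
        ext a
        simp [and_comm]
    · have : f B i = A := by
        rw [hf]
        simp only [h]
        simp
      rw [this]; exact hAT
  -- injectivity
  have hinj : Set.InjOn f A.powerset := by
    intro B₁ h₁ B₂ h₂ hf12
    have hB₁ := Finset.mem_powerset.1 h₁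
    have hB₂ := Finset.mem_powerset.1 h₂
    apply Finset.coe_injective
    rw [hrecover B₁ hB₁, hrecover B₂ hB₂, hf12]
  -- counting
  have hcount := Finset.card_le_card_of_injOn f hmaps hinj
  rw [Finset.card_powerset, hA, Fintype.card_piFinset] at hcount
  simp only [Finset.prod_const, Finset.card_univ, Fintype.card_fin] at hcount
  exact hcount.trans (Nat.pow_le_pow_left hTcard k)

lemma behw_part2 {X : Type*} (F : Set (Set X)) (t k : ℕ)
    (ht : 1 ≤ t) (hk : 1 ≤ k)
    (hVC : ∀ Y : Finset X, ShatteredBy F Y → Y.card ≤ t)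
    (A : Finset X) (hsh : ShatteredBy (InterClosure F k) A) :
    (A.card : ℝ) ≤ 4 * t * k * Real.logb 2 (k + 1) := by
  by_cases hk1 : k = 1
  · -- k = 1 : InterClosure F 1 ⊆ F
    subst hk1
    have hshF : ShatteredBy F A := by
      intro B hB
      obtain ⟨S, hS, hSB⟩ := hsh B hB
      obtain ⟨G, hGF, hGne, hGk, rfl⟩ := hS
      have hcard : G.card = 1 := le_antisymm hGk (Finset.card_pos.2 hGne)
      obtain ⟨T, rfl⟩ := Finset.card_eq_one.1 hcard
      refine ⟨T, hGF (Finset.mem_singleton_self T), ?_⟩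
      rwa [Finset.coe_singleton, Set.sInter_singleton] at hSB
    have hct : A.card ≤ t := hVC A hshF
    have hlogb : Real.logb 2 ((1:ℕ) + 1) = 1 := by
      norm_num
    push_cast
    rw [show ((1:ℝ)+1) = 2 by norm_num, Real.logb_self_eq_one (by norm_num : (1:ℝ) < 2)]
    have : (A.card : ℝ) ≤ t := by exact_mod_cast hct
    have ht' : (1:ℝ) ≤ t := by exact_mod_cast ht
    nlinarith
  · have hk2 : 2 ≤ k := by omega
    by_contra hcon
    push_neg at hcon
    -- hcon : 4 * ↑t * ↑k * Real.logb 2 (↑k + 1) < ↑A.card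
    have h1 := behw_part1 F t k hk hVC A A.card rfl hsh
    set m : ℕ := A.card with hmdef
    have hlog2 : (0:ℝ) < Real.log 2 := Real.log_pos (by norm_num)
    have hln2 : (4:ℝ)/9 ≤ Real.log 2 := by
      calc (4:ℝ)/9 ≤ 0.6931471803 := by norm_num
        _ ≤ Real.log 2 := Real.log_two_gt_d9.le
    set L : ℝ := Real.logb 2 ((k:ℝ)+1) with hLdef
    set u : ℝ := Real.log ((k:ℝ)+1) with hudef
    have hLu : L = u / Real.log 2 := by rw [hLdef, Real.logb, hudef]
    have hK0 : (0:ℝ) < k := by exact_mod_cast (by omega : 0 < k)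
    have hK2 : (2:ℝ) ≤ k := by exact_mod_cast hk2
    have hT0 : (0:ℝ) < t := by exact_mod_cast ht
    have hu2 : Real.log 2 ≤ u := by
      rw [hudef]
      exact Real.log_le_log (by norm_num) (by linarith)
    have hL1 : 1 ≤ L := by rw [hLu, le_div_iff₀ hlog2]; linarith
    have hL0 : (0:ℝ) < L := by linarith
    set M : ℝ := 4*(t:ℝ)*(k:ℝ)*L with hMdef
    have hM0 : (0:ℝ) < M := by
      rw [hMdef]; exact mul_pos (mul_pos (mul_pos (by norm_num) hT0) hK0) hL0
    clear_value m L u M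
    have hMm : M < (m:ℝ) := hcon
    have hm0 : (0:ℝ) < m := lt_trans hM0 hMm
    have htm : t < m := by
      have e1 : (0:ℝ) ≤ 4*(t:ℝ)*(k:ℝ)*(L-1) := by
        apply mul_nonneg (by positivity) (by linarith)
      have e2 : (0:ℝ) ≤ 4*(t:ℝ)*((k:ℝ)-2) := by
        apply mul_nonneg (by positivity) (by linarith)
      have : (t:ℝ) < m := by nlinarith [hMm, hT0]
      exact_mod_cast this
    -- from part1 + sauer
    have hS := sauer_real m t ht (le_of_lt htm)
    have h1' : ((2:ℝ))^m ≤ ((∑ i ∈ Finset.range (t+1), m.choose i : ℕ) : ℝ)^k := by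
      exact_mod_cast h1
    have h3 : (2:ℝ)^m ≤ (Real.exp t * ((m:ℝ)/t)^t)^k :=
      h1'.trans (pow_le_pow_left₀ (by positivity) hS k)
    have h4 : (m:ℝ) * Real.log 2 ≤ (k:ℝ) * ((t:ℝ) + (t:ℝ) * (Real.log m - Real.log t)) := by
      have h4' := Real.log_le_log (by positivity : (0:ℝ) < 2^m) h3
      rwa [Real.log_pow, Real.log_pow, Real.log_mul (Real.exp_ne_zero _) (by positivity),
        Real.log_exp, Real.log_pow, Real.log_div hm0.ne' hT0.ne'] at h4'
    -- tangent bound on log m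
    have h5 : Real.log m ≤ Real.log M + ((m:ℝ)/M - 1) := by
      have h5' := Real.log_le_sub_one_of_pos (div_pos hm0 hM0)
      rw [Real.log_div hm0.ne' hM0.ne'] at h5'
      linarith
    -- log M = log t + log (4 k L)
    have h6 : Real.log M = Real.log t + Real.log (4*(k:ℝ)*L) := by
      have : M = (t:ℝ) * (4*(k:ℝ)*L) := by rw [hMdef]; ring
      rw [this, Real.log_mul hT0.ne' (by positivity)]
    have keynum : Real.log (4*(k:ℝ)*L) + 1 ≤ 4 * u := by
      have := key_numeric k hk2
      rw [← hLdef, ← hudef] at this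
      exact this
    -- combine
    have hkt0 : (0:ℝ) ≤ (k:ℝ)*(t:ℝ) := by positivity
    have s1 : (k:ℝ)*(t:ℝ)*Real.log m
        ≤ (k:ℝ)*(t:ℝ)*(Real.log M + ((m:ℝ)/M - 1)) := mul_le_mul_of_nonneg_left h5 hkt0
    have s4 : (k:ℝ)*(t:ℝ)*Real.log (4*(k:ℝ)*L) ≤ (k:ℝ)*(t:ℝ)*(4*u - 1) :=
      mul_le_mul_of_nonneg_left (by linarith) hkt0
    have e3 : (k:ℝ)*(t:ℝ)*((m:ℝ)/M) = (m:ℝ)/(4*L) := by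
      rw [hMdef]; field_simp
    have ediv : (u / Real.log 2) * Real.log 2 = u := div_mul_cancel₀ u hlog2.ne'
    have e4 : M*Real.log 2 = 4*(k:ℝ)*(t:ℝ)*u := by
      rw [hMdef, hLu]; linear_combination (4*(t:ℝ)*(k:ℝ)) * ediv
    have e5 : (k:ℝ)*(t:ℝ) = M/(4*L) := by
      rw [hMdef, eq_div_iff (by positivity : (0:ℝ) < 4*L).ne']; ring
    have h6' : (k:ℝ)*(t:ℝ)*Real.log M
        = (k:ℝ)*(t:ℝ)*Real.log t + (k:ℝ)*(t:ℝ)*Real.log (4*(k:ℝ)*L) := by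
      rw [h6]; ring
    have h4e : (m:ℝ)*Real.log 2 ≤ (k:ℝ)*(t:ℝ) + (k:ℝ)*(t:ℝ)*Real.log m - (k:ℝ)*(t:ℝ)*Real.log t :=
      calc (m:ℝ)*Real.log 2 ≤ (k:ℝ) * ((t:ℝ) + (t:ℝ) * (Real.log m - Real.log t)) := h4
        _ = (k:ℝ)*(t:ℝ) + (k:ℝ)*(t:ℝ)*Real.log m - (k:ℝ)*(t:ℝ)*Real.log t := by ring
    have s1e : (k:ℝ)*(t:ℝ)*Real.log m
        ≤ (k:ℝ)*(t:ℝ)*Real.log M + (k:ℝ)*(t:ℝ)*((m:ℝ)/M) - (k:ℝ)*(t:ℝ) :=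
      calc (k:ℝ)*(t:ℝ)*Real.log m ≤ (k:ℝ)*(t:ℝ)*(Real.log M + ((m:ℝ)/M - 1)) := s1
        _ = (k:ℝ)*(t:ℝ)*Real.log M + (k:ℝ)*(t:ℝ)*((m:ℝ)/M) - (k:ℝ)*(t:ℝ) := by ring
    have s4e : (k:ℝ)*(t:ℝ)*Real.log (4*(k:ℝ)*L) ≤ 4*((k:ℝ)*(t:ℝ)*u) - (k:ℝ)*(t:ℝ) :=
      calc (k:ℝ)*(t:ℝ)*Real.log (4*(k:ℝ)*L) ≤ (k:ℝ)*(t:ℝ)*(4*u - 1) := s4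
        _ = 4*((k:ℝ)*(t:ℝ)*u) - (k:ℝ)*(t:ℝ) := by ring
    clear hsh hVC h1 hS h1' h3 hcon h4 s1 s4 h6 hmdef
    -- s6 : m log2 ≤ M log2 - M/(4L) + m/(4L)
    have s6 : (m:ℝ)*Real.log 2 ≤ M*Real.log 2 - M/(4*L) + (m:ℝ)/(4*L) := by
      linarith [h4e, s1e, s4e, h6', e3, e4, e5]
    -- clear denominators and contradict
    have hq0 : ((m:ℝ) - M)*Real.log 2 ≤ (m:ℝ)/(4*L) - M/(4*L) :=
      calc ((m:ℝ) - M)*Real.log 2 = (m:ℝ)*Real.log 2 - M*Real.log 2 := by ring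
        _ ≤ (m:ℝ)/(4*L) - M/(4*L) := by linarith [s6]
    have hq1 := mul_le_mul_of_nonneg_right hq0 (by positivity : (0:ℝ) ≤ 4*L)
    have t1 : ((m:ℝ)/(4*L) - M/(4*L))*(4*L) = (m:ℝ) - M := by field_simp
    have hq : ((m:ℝ) - M)*(4*L)*Real.log 2 ≤ (m:ℝ) - M :=
      calc ((m:ℝ) - M)*(4*L)*Real.log 2 = (((m:ℝ) - M)*Real.log 2)*(4*L) := by ring
        _ ≤ ((m:ℝ)/(4*L) - M/(4*L))*(4*L) := hq1
        _ = (m:ℝ) - M := t1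
    have hD : (0:ℝ) < (m:ℝ) - M := by linarith
    have f1 : ((m:ℝ) - M)*4 ≤ ((m:ℝ) - M)*(4*L) :=
      mul_le_mul_of_nonneg_left (by linarith : (4:ℝ) ≤ 4*L) hD.le
    have f1' : (((m:ℝ) - M)*4)*Real.log 2 ≤ (((m:ℝ) - M)*(4*L))*Real.log 2 :=
      mul_le_mul_of_nonneg_right f1 hlog2.le
    have f2 : (((m:ℝ) - M)*4)*((4:ℝ)/9) ≤ (((m:ℝ) - M)*4)*Real.log 2 :=
      mul_le_mul_of_nonneg_left hln2 (by positivity)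
    have hfin : ((m:ℝ) - M)*(4*L)*Real.log 2 = (((m:ℝ) - M)*(4*L))*Real.log 2 := by ring
    have hfin2 : (((m:ℝ) - M)*4)*((4:ℝ)/9) = (16/9)*((m:ℝ) - M) := by ring
    linarith [hq, f1', f2, hD]

theorem behw_intersection_bound {X : Type*} (F : Set (Set X)) (t k : ℕ)
    (ht : 1 ≤ t) (hk : 1 ≤ k)
    (hVC : ∀ Y : Finset X, ShatteredBy F Y → Y.card ≤ t) :
    (∀ (A : Finset X) (m : ℕ), A.card = m → ShatteredBy (InterClosure F k) A →
      2 ^ m ≤ (∑ i ∈ Finset.range (t + 1), m.choose i) ^ k) ∧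
    (∀ A : Finset X, ShatteredBy (InterClosure F k) A →
      (A.card : ℝ) ≤ 4 * t * k * Real.logb 2 (k + 1)) := by
  constructor
  · intro A m hA hsh
    exact behw_part1 F t k hk hVC A m hA hsh
  · intro A hsh
    exact behw_part2 F t k ht hk hVC A hsh
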